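/- Let d, e, f ∈ ℂ. If d = e, or e = f, or f = d, or e = 0, then the diagonal matrix diag(d,e,f) can be written as a product of two 3×3 complex Toeplitz matrices. -/

import Mathlib

def IsToeplitz {n : ℕ} (M : Matrix (Fin n) (Fin n) ℂ) : Prop :=
  ∀ (i j : Fin n) (hi : (i : ℕ) + 1 < n) (hj : (j : ℕ) + 1 < n),
    M i j = M ⟨i + 1, hi⟩ ⟨j + 1, hj⟩

lemma isToeplitz_of (M : Matrix (Fin 3) (Fin 3) ℂ)
    (h1 : M 0 0 = M 1 1) (h2 : M 1 1 = M 2 2) (h3 : M 0 1 = M 1 2) (h4 : M 1 0 = M 2 1) :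
    IsToeplitz M := by
  rintro ⟨i, hi'⟩ ⟨j, hj'⟩ hi hj
  simp only [Fin.mk_lt_mk] at *
  interval_cases i <;> interval_cases j <;>
    first
    | assumption
    | (simp only [Fin.val_mk] at hi hj; omega)

theorem diag_degenerate_is_product_of_two_toeplitz (d e f : ℂ)
    (h : d = e ∨ e = f ∨ f = d ∨ e = 0) :
    ∃ T₁ T₂ : Matrix (Fin 3) (Fin 3) ℂ,
      IsToeplitz T₁ ∧ IsToeplitz T₂ ∧ T₁ * T₂ = Matrix.diagonal ![d, e, f] := by
  rcases h with h | h | h | h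
  · -- d = e
    subst h
    refine ⟨!![0,1,0; 0,0,1; 1,0,0], !![0,0,f; d,0,0; 0,d,0], ?_, ?_, ?_⟩
    · apply isToeplitz_of <;> simp [Matrix.vecHead, Matrix.vecTail]
    · apply isToeplitz_of <;> simp [Matrix.vecHead, Matrix.vecTail]
    · ext i j
      fin_cases i <;> fin_cases j <;>
        simp [Matrix.mul_apply, Fin.sum_univ_three, Matrix.diagonal, Matrix.vecHead, Matrix.vecTail]
  · -- e = f
    subst h
    refine ⟨!![0,0,1; 1,0,0; 0,1,0], !![0,e,0; 0,0,e; d,0,0], ?_, ?_, ?_⟩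
    · apply isToeplitz_of <;> simp [Matrix.vecHead, Matrix.vecTail]
    · apply isToeplitz_of <;> simp [Matrix.vecHead, Matrix.vecTail]
    · ext i j
      fin_cases i <;> fin_cases j <;>
        simp [Matrix.mul_apply, Fin.sum_univ_three, Matrix.diagonal, Matrix.vecHead, Matrix.vecTail]
  · -- f = d
    subst h
    by_cases he : e = 0
    · subst he
      refine ⟨!![0,0,f; 0,0,0; f,0,0], !![0,0,1; 0,0,0; 1,0,0], ?_, ?_, ?_⟩
      · apply isToeplitz_of <;> simp [Matrix.vecHead, Matrix.vecTail]
      · apply isToeplitz_of <;> simp [Matrix.vecHead, Matrix.vecTail]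
      · ext i j
        fin_cases i <;> fin_cases j <;>
          simp [Matrix.mul_apply, Fin.sum_univ_three, Matrix.diagonal, Matrix.vecHead, Matrix.vecTail]
    · refine ⟨!![e,0,f-e; 0,e,0; -e,0,e], !![1,0,(e-f)/e; 0,1,0; 1,0,1], ?_, ?_, ?_⟩
      · apply isToeplitz_of <;> simp [Matrix.vecHead, Matrix.vecTail]
      · apply isToeplitz_of <;> simp [Matrix.vecHead, Matrix.vecTail]
      · ext i j
        fin_cases i <;> fin_cases j <;>
          simp [Matrix.mul_apply, Fin.sum_univ_three, Matrix.diagonal, Matrix.vecHead, Matrix.vecTail] <;>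
          field_simp <;> ring
  · -- e = 0
    subst h
    refine ⟨!![0,0,d; 0,0,0; f,0,0], !![0,0,1; 0,0,0; 1,0,0], ?_, ?_, ?_⟩
    · apply isToeplitz_of <;> simp [Matrix.vecHead, Matrix.vecTail]
    · apply isToeplitz_of <;> simp [Matrix.vecHead, Matrix.vecTail]
    · ext i j
      fin_cases i <;> fin_cases j <;>
        simp [Matrix.mul_apply, Fin.sum_univ_three, Matrix.diagonal, Matrix.vecHead, Matrix.vecTail]
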